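/- Let Q be a self-join-free CQ over schema (R, Delta) such that its FD-extension Q+ is acyclic but not free-connex, and let (x, z_1, ..., z_k, y) be a head-path of Q+. Then there exist sets of variables V_x, V_y, V_z of Q+ such that: (1) x in V_x, y in V_y, and {z_1,...,z_k} subseteq V_z; (2) for every FD U -> v in Delta_{Q+} with v in V_alpha (alpha in {x,y,z}), U intersects V_alpha; (3) for every atom R of Q+, var(R) is disjoint from V_x or var(R) is disjoint from V_y; (4) V_z is disjoint from free(Q+). -/

import Mathlib

structure CQHypergraph (V : Type*) where
  edges : Set (Set V)
  nonempty_of_mem : ∀ e ∈ edges, e.Nonempty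

namespace CQHypergraph

variable {V : Type*}

/-- The vertex set of a hypergraph: all vertices occurring in some edge. -/
def vertexSet (H : CQHypergraph V) : Set V := ⋃ e ∈ H.edges, e

/-- Two vertices are neighbors if they appear together in some edge. -/
def Neighbors (H : CQHypergraph V) (u v : V) : Prop := ∃ e ∈ H.edges, u ∈ e ∧ v ∈ e

/-- A clique: a set of pairwise neighboring vertices. -/
def IsClique (H : CQHypergraph V) (C : Set V) : Prop := ∀ u ∈ C, ∀ v ∈ C, H.Neighbors u v

/-- Conformal: every clique is contained in some edge. -/
def Conformal (H : CQHypergraph V) : Prop := ∀ C : Set V, H.IsClique C → ∃ e ∈ H.edges, C ⊆ e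

/-- A chordless cycle (x_1, ..., x_n), n ≥ 3, of distinct vertices: the neighboring
pairs among them are exactly the consecutive (cyclically) ones. -/
def HasChordlessCycle (H : CQHypergraph V) : Prop :=
  ∃ (n : ℕ) (x : Fin (n + 3) → V), Function.Injective x ∧
    (∀ i, x i ∈ H.vertexSet) ∧
    ∀ i j : Fin (n + 3), i ≠ j → (H.Neighbors (x i) (x j) ↔ (j = i + 1 ∨ i = j + 1))

/-- A join tree: a tree on the edges of `H` such that for each vertex the set of
edges containing it induces a connected subtree (running intersection property). -/
def IsJoinTree (H : CQHypergraph V) (T : SimpleGraph ↥H.edges) : Prop :=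
  T.IsTree ∧ ∀ v ∈ H.vertexSet, (T.induce {e : ↥H.edges | v ∈ e.1}).Connected

/-- A hypergraph is acyclic if it admits a join tree. -/
def Acyclic (H : CQHypergraph V) : Prop := ∃ T : SimpleGraph ↥H.edges, H.IsJoinTree T

end CQHypergraph
/-- An abstract conjunctive query: a list of atoms (each given by its set of
variables) together with the set of free (head) variables. -/
structure Query (Var : Type*) where
  atoms : List (Set Var)
  free : Set Var

namespace Query

variable {Var : Type*}

def varSet (Q : Query Var) : Set Var := {v | ∃ e ∈ Q.atoms, v ∈ e}

/-- The hypergraph `H(Q)` of a query: vertices are variables, edges are the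
variable sets of the atoms. -/
def hypergraph (Q : Query Var) : CQHypergraph Var where
  edges := {e | e ∈ Q.atoms ∧ e.Nonempty}
  nonempty_of_mem := fun _ he => he.2

/-- `H(Q)` with the head added as an extra edge. -/
def headHypergraph (Q : Query Var) : CQHypergraph Var where
  edges := {e | (e ∈ Q.atoms ∨ e = Q.free) ∧ e.Nonempty}
  nonempty_of_mem := fun _ he => he.2

def Acyclic (Q : Query Var) : Prop := Q.hypergraph.Acyclic

def FreeConnex (Q : Query Var) : Prop := Q.hypergraph.Acyclic ∧ Q.headHypergraph.Acyclic

end Query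

/-- One extension step of a query according to a functional dependency `X → y`
(identified with variables; the FD must be witnessed by some atom containing
`X ∪ {y}`): either some atom containing `X` but not `y` gets `y` appended (and
other atoms -- e.g. those with the same relation symbol -- may get a fresh
variable appended), or the head containing `X` but not `y` gets `y` appended. -/
inductive ExtStep {Var : Type*} (Δ : Set (Set Var × Var)) : Query Var → Query Var → Prop
  | atomExt (Q Q' : Query Var) (X : Set Var) (y : Var) (i : ℕ) :
      (X, y) ∈ Δ →
      (∃ e ∈ Q.atoms, X ⊆ e ∧ y ∈ e) →
      i < Q.atoms.length →
      X ⊆ Q.atoms.getD i ∅ →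
      y ∉ Q.atoms.getD i ∅ →
      Q'.atoms.length = Q.atoms.length →
      Q'.atoms.getD i ∅ = Q.atoms.getD i ∅ ∪ {y} →
      (∀ j, j < Q.atoms.length → j ≠ i →
        Q'.atoms.getD j ∅ = Q.atoms.getD j ∅ ∨
        ∃ t : Var, t ∉ Q.varSet ∧ t ∉ Q.free ∧ t ≠ y ∧
          (∀ l, l < Q.atoms.length → l ≠ j → t ∉ Q'.atoms.getD l ∅) ∧
          Q'.atoms.getD j ∅ = Q.atoms.getD j ∅ ∪ {t}) →
      Q'.free = Q.free →
      ExtStep Δ Q Q'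
  | headExt (Q Q' : Query Var) (X : Set Var) (y : Var) :
      (X, y) ∈ Δ →
      (∃ e ∈ Q.atoms, X ⊆ e ∧ y ∈ e) →
      X ⊆ Q.free →
      y ∉ Q.free →
      Q'.atoms = Q.atoms →
      Q'.free = Q.free ∪ {y} →
      ExtStep Δ Q Q'

/-- `Qp` is the FD-extension of `Q` w.r.t. `Δ`: it is obtained from `Q` by a
sequence of extension steps, and no further extension step applies (fixpoint). -/
def IsFDExtension {Var : Type*} (Δ : Set (Set Var × Var)) (Q Qp : Query Var) : Prop :=
  Relation.ReflTransGen (ExtStep Δ) Q Qp ∧ ∀ Q' : Query Var, ¬ ExtStep Δ Qp Q'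
/-- A head-path `(x, z_1, ..., z_k, y)`, `k ≥ 1`, for a hypergraph `H` with free
vertices `F`: a chordless path of distinct vertices, whose endpoints `x = v 0`
and `y = v (k+1)` are free and whose middle vertices are not free; consecutive
vertices co-occur in some edge, non-consecutive ones do not. -/
structure HeadPath {V : Type*} (H : CQHypergraph V) (F : Set V) (k : ℕ) where
  v : Fin (k + 2) → V
  kpos : 1 ≤ k
  inj : Function.Injective v
  first_free : v 0 ∈ F
  last_free : v (Fin.last (k + 1)) ∈ F
  mid_not_free : ∀ i : Fin (k + 2), i ≠ 0 → i ≠ Fin.last (k + 1) → v i ∉ F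
  consec : ∀ i : Fin (k + 1), H.Neighbors (v i.castSucc) (v i.succ)
  chordless : ∀ i j : Fin (k + 2), (i : ℕ) + 1 < (j : ℕ) → ¬ H.Neighbors (v i) (v j)

section AuxLemmas

variable {V : Type*} {G : SimpleGraph V}

/-- Along a path from a vertex-set member to a non-member, there is a "cut" edge
`(p, q)` with `P p`, `¬ P q`, such that `q` still reaches the endpoint after
deleting that edge. -/
private lemma exists_cut_edge (P : V → Prop) :
    ∀ {a b : V} (w : G.Walk a b), w.IsPath → P a → ¬ P b →
      ∃ p q : V, G.Adj p q ∧ P p ∧ ¬ P q ∧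
        (G.deleteEdges {s(p, q)}).Reachable q b := by
  intro a b w
  induction w with
  | nil => intro _ ha hb; exact absurd ha hb
  | @cons u c d h w ih =>
    intro hw ha hb
    by_cases hc : P c
    · exact ih ((SimpleGraph.Walk.cons_isPath_iff h w).mp hw).1 hc hb
    · refine ⟨u, c, h, ha, hc, ?_⟩
      have hu : u ∉ w.support := ((SimpleGraph.Walk.cons_isPath_iff h w).mp hw).2
      refine ⟨w.toDeleteEdges {s(u, c)} ?_⟩
      intro e he hmem
      rw [Set.mem_singleton_iff] at hmem
      subst hmem
      exact hu (w.fst_mem_support_of_mem_edges he)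

/-- If a walk inside the induced subgraph on `A` goes from the `p`-side to the
other side of the cut edge `(p, q)`, then `q ∈ A`. -/
private lemma cut_crossing {p q : V}
    (hsep : ¬ (G.deleteEdges {s(p, q)}).Reachable p q) {A : Set V} :
    ∀ {a b : ↥A} (w : (G.induce A).Walk a b),
      (G.deleteEdges {s(p, q)}).Reachable p ↑a →
      ¬ (G.deleteEdges {s(p, q)}).Reachable p ↑b → q ∈ A := by
  intro a b w
  induction w with
  | nil => intro ha hb; exact absurd ha hb
  | @cons u c d h w ih =>
    intro ha hb
    by_cases hc : (G.deleteEdges {s(p, q)}).Reachable p ↑c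
    · exact ih hc hb
    · have hadj : G.Adj ↑u ↑c := h
      by_cases he : s((u : V), (c : V)) = s(p, q)
      · rcases Sym2.eq_iff.mp he with ⟨h1, h2⟩ | ⟨h1, h2⟩
        · exact h2 ▸ c.2
        · exact absurd (h1 ▸ ha) hsep
      · have hadj' : (G.deleteEdges {s(p, q)}).Adj ↑u ↑c := by
          rw [SimpleGraph.deleteEdges_adj]
          exact ⟨hadj, by simpa using he⟩
        exact absurd (ha.trans hadj'.reachable) hc

end AuxLemmas

private lemma list_getD_eq {α : Type*} (l : List α) (d : α) {i : ℕ}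
    (h : i < l.length) : l.getD i d = l[i] := by
  simp [List.getD_eq_getElem?_getD, List.getElem?_eq_getElem h]

/-- Let `Q` be a self-join-free CQ whose FD-extension `Qp = Q⁺` is
acyclic but not free-connex, with head-path `(x, z_1, ..., z_k, y)` (here
`x = hp.v 0`, `y = hp.v (last)`, middle vertices the `z_i`). Then there are sets
of variables `V_x, V_y, V_z` of `Q⁺` satisfying (1) `x ∈ V_x`, `y ∈ V_y`,
`{z_1,...,z_k} ⊆ V_z`; (2) every FD `U → v` of `Δ_{Q⁺}` (i.e. of `Δ` witnessed
in `Q⁺`) with `v ∈ V_α` has `U ∩ V_α ≠ ∅`; (3) every atom is disjoint from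
`V_x` or from `V_y`; (4) `V_z` is disjoint from `free(Q⁺)`. -/
theorem reduction_sets_exist
    {Var : Type*} (Δ : Set (Set Var × Var)) (Q Qp : Query Var)
    (hext : IsFDExtension Δ Q Qp)
    (hsjf : Qp.atoms.Nodup)
    (hacyc : Qp.Acyclic) (hnfc : ¬ Qp.FreeConnex)
    (k : ℕ) (hp : HeadPath Qp.hypergraph Qp.free k) :
    ∃ Vx Vy Vz : Set Var,
      Vx ⊆ Qp.varSet ∧ Vy ⊆ Qp.varSet ∧ Vz ⊆ Qp.varSet ∧
      hp.v 0 ∈ Vx ∧ hp.v (Fin.last (k + 1)) ∈ Vy ∧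
      (∀ i : Fin (k + 2), i ≠ 0 → i ≠ Fin.last (k + 1) → hp.v i ∈ Vz) ∧
      (∀ U v, (U, v) ∈ Δ → (∃ e ∈ Qp.atoms, U ⊆ e ∧ v ∈ e) →
        (v ∈ Vx → (U ∩ Vx).Nonempty) ∧
        (v ∈ Vy → (U ∩ Vy).Nonempty) ∧
        (v ∈ Vz → (U ∩ Vz).Nonempty)) ∧
      (∀ e ∈ Qp.atoms, e ∩ Vx = ∅ ∨ e ∩ Vy = ∅) ∧
      Vz ∩ Qp.free = ∅ := by
  classical
  -- Fixpoint consequences of the FD-extension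
  have Fix1 : ∀ U v, (U, v) ∈ Δ → (∃ e ∈ Qp.atoms, U ⊆ e ∧ v ∈ e) →
      ∀ e ∈ Qp.atoms, U ⊆ e → v ∈ e := by
    intro U v hUv hwit e he hUe
    by_contra hve
    obtain ⟨i, hi, hei⟩ := List.getElem_of_mem he
    apply hext.2 ⟨Qp.atoms.set i (e ∪ {v}), Qp.free⟩
    refine ExtStep.atomExt Qp _ U v i hUv hwit hi ?_ ?_ ?_ ?_ ?_ rfl
    · rw [list_getD_eq _ _ hi, hei]; exact hUe
    · rw [list_getD_eq _ _ hi, hei]; exact hve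
    · exact List.length_set ..
    · show (Qp.atoms.set i (e ∪ {v})).getD i ∅ = _
      rw [list_getD_eq _ _ (by rw [List.length_set]; exact hi), List.getElem_set_self,
        list_getD_eq _ _ hi, hei]
    · intro j hj hji
      left
      show (Qp.atoms.set i (e ∪ {v})).getD j ∅ = _
      rw [list_getD_eq _ _ (by rw [List.length_set]; exact hj),
        List.getElem_set_ne (Ne.symm hji), list_getD_eq _ _ hj]
  have Fix2 : ∀ U v, (U, v) ∈ Δ → (∃ e ∈ Qp.atoms, U ⊆ e ∧ v ∈ e) →
      U ⊆ Qp.free → v ∈ Qp.free := by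
    intro U v hUv hwit hUf
    by_contra hvf
    exact hext.2 ⟨Qp.atoms, Qp.free ∪ {v}⟩
      (ExtStep.headExt Qp _ U v hUv hwit hUf hvf rfl rfl)
  -- the join tree
  obtain ⟨T, hTtree, hTind⟩ := hacyc
  -- endpoints of the head-path
  have hxy : ¬ Qp.hypergraph.Neighbors (hp.v 0) (hp.v (Fin.last (k + 1))) := by
    refine hp.chordless 0 (Fin.last (k + 1)) ?_
    have := hp.kpos
    simp only [Fin.val_zero, Fin.val_last]
    omega
  have h0 := hp.consec 0
  rw [Fin.castSucc_zero] at h0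
  obtain ⟨ex, hexE, hxex, -⟩ := h0
  have hl := hp.consec (Fin.last k)
  rw [Fin.succ_last] at hl
  obtain ⟨ey, heyE, -, hyey⟩ := hl
  have hxney : hp.v 0 ∉ ey := fun hx => hxy ⟨ey, heyE, hx, hyey⟩
  -- a path in the join tree from an atom with x to an atom with y, and the cut edge
  obtain ⟨w0⟩ := hTtree.isConnected.preconnected ⟨ex, hexE⟩ ⟨ey, heyE⟩
  obtain ⟨p, q, hpq, hxp, hxq, hqey⟩ :=
    exists_cut_edge (fun e : ↥Qp.hypergraph.edges => hp.v 0 ∈ e.1)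
      w0.toPath.1 w0.toPath.2 hxex hxney
  have hbr : T.IsBridge s(p, q) :=
    SimpleGraph.isAcyclic_iff_forall_adj_isBridge.mp hTtree.IsAcyclic hpq
  have hsep : ¬ (T.deleteEdges {s(p, q)}).Reachable p q := (SimpleGraph.isBridge_iff.mp hbr)
  have hsep' : ¬ (T.deleteEdges {s(q, p)}).Reachable q p := by
    rw [Sym2.eq_swap]; exact fun h => hsep h.symm
  -- the crossing lemma in the symmetric direction
  have cut_crossing' : ∀ (A : Set ↥Qp.hypergraph.edges) (a b : ↥A)
      (_ : (T.induce A).Walk a b),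
      (T.deleteEdges {s(p, q)}).Reachable q ↑a →
      ¬ (T.deleteEdges {s(p, q)}).Reachable q ↑b → p ∈ A := by
    intro A a b w ha hb
    refine cut_crossing hsep' w ?_ ?_ <;> rw [Sym2.eq_swap]
    · exact ha
    · exact hb
  -- every atom containing x is on the p-side
  have memx : ∀ e : ↥Qp.hypergraph.edges, hp.v 0 ∈ e.1 →
      (T.deleteEdges {s(p, q)}).Reachable p e := by
    intro e hx'
    by_contra hne
    have hxv : hp.v 0 ∈ Qp.hypergraph.vertexSet := Set.mem_biUnion hexE hxex
    obtain ⟨w⟩ := (hTind _ hxv).preconnected ⟨p, hxp⟩ ⟨e, hx'⟩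
    exact hxq (cut_crossing hsep w (SimpleGraph.Reachable.refl _) hne)
  -- every atom containing y is on the q-side
  have hynp : hp.v (Fin.last (k + 1)) ∉ p.1 := fun hy => hxy ⟨p.1, p.2, hxp, hy⟩
  have memy : ∀ e : ↥Qp.hypergraph.edges, hp.v (Fin.last (k + 1)) ∈ e.1 →
      (T.deleteEdges {s(p, q)}).Reachable q e := by
    intro e hy'
    by_contra hne
    have hyv : hp.v (Fin.last (k + 1)) ∈ Qp.hypergraph.vertexSet :=
      Set.mem_biUnion heyE hyey
    obtain ⟨w⟩ := (hTind _ hyv).preconnected ⟨⟨ey, heyE⟩, hyey⟩ ⟨e, hy'⟩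
    exact hynp (cut_crossing' _ _ _ w hqey hne)
  -- the three sets
  refine ⟨{a | (∃ e : ↥Qp.hypergraph.edges, a ∈ e.1) ∧
              ∀ e : ↥Qp.hypergraph.edges, a ∈ e.1 → (T.deleteEdges {s(p, q)}).Reachable p e},
          {a | (∃ e : ↥Qp.hypergraph.edges, a ∈ e.1) ∧
              ∀ e : ↥Qp.hypergraph.edges, a ∈ e.1 → (T.deleteEdges {s(p, q)}).Reachable q e},
          Qp.varSet \ Qp.free, ?_, ?_, ?_, ?_, ?_, ?_, ?_, ?_, ?_⟩
  · rintro a ⟨⟨e, he⟩, -⟩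
    exact ⟨e.1, e.2.1, he⟩
  · rintro a ⟨⟨e, he⟩, -⟩
    exact ⟨e.1, e.2.1, he⟩
  · exact Set.diff_subset
  · exact ⟨⟨⟨ex, hexE⟩, hxex⟩, memx⟩
  · exact ⟨⟨⟨ey, heyE⟩, hyey⟩, memy⟩
  · intro i hi0 hil
    have hik := i.isLt
    have hi1 : 1 ≤ (i : ℕ) :=
      Nat.one_le_iff_ne_zero.mpr fun h => hi0 (Fin.ext (by simp [h]))
    have hji : (⟨(i : ℕ) - 1, by omega⟩ : Fin (k + 1)).succ = i := by
      apply Fin.ext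
      simp only [Fin.val_succ]
      omega
    obtain ⟨e, heE, -, hie⟩ := hp.consec ⟨(i : ℕ) - 1, by omega⟩
    rw [hji] at hie
    exact ⟨⟨e, heE.1, hie⟩, hp.mid_not_free i hi0 hil⟩
  · intro U v hUv hwit
    obtain ⟨e₀, he₀, hUe₀, hve₀⟩ := hwit
    have hE₀ : e₀ ∈ Qp.hypergraph.edges := ⟨he₀, v, hve₀⟩
    refine ⟨?_, ?_, ?_⟩
    · intro hvx
      by_contra hne
      have hq : U ⊆ q.1 := by
        intro u hu
        have hnu : ¬ ∀ e : ↥Qp.hypergraph.edges, u ∈ e.1 →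
            (T.deleteEdges {s(p, q)}).Reachable p e := by
          intro hall
          exact hne ⟨u, hu, ⟨⟨e₀, hE₀⟩, hUe₀ hu⟩, hall⟩
        push_neg at hnu
        obtain ⟨eu, hueu, heu⟩ := hnu
        have huv : u ∈ Qp.hypergraph.vertexSet := Set.mem_biUnion hE₀ (hUe₀ hu)
        obtain ⟨w⟩ := (hTind _ huv).preconnected ⟨⟨e₀, hE₀⟩, hUe₀ hu⟩ ⟨eu, hueu⟩
        exact cut_crossing hsep w (hvx.2 ⟨e₀, hE₀⟩ hve₀) heu
      have hvq : v ∈ q.1 := Fix1 U v hUv ⟨e₀, he₀, hUe₀, hve₀⟩ q.1 q.2.1 hq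
      exact hsep (hvx.2 q hvq)
    · intro hvy
      by_contra hne
      have hq : U ⊆ p.1 := by
        intro u hu
        have hnu : ¬ ∀ e : ↥Qp.hypergraph.edges, u ∈ e.1 →
            (T.deleteEdges {s(p, q)}).Reachable q e := by
          intro hall
          exact hne ⟨u, hu, ⟨⟨e₀, hE₀⟩, hUe₀ hu⟩, hall⟩
        push_neg at hnu
        obtain ⟨eu, hueu, heu⟩ := hnu
        have huv : u ∈ Qp.hypergraph.vertexSet := Set.mem_biUnion hE₀ (hUe₀ hu)
        obtain ⟨w⟩ := (hTind _ huv).preconnected ⟨⟨e₀, hE₀⟩, hUe₀ hu⟩ ⟨eu, hueu⟩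
        exact cut_crossing' _ _ _ w (hvy.2 ⟨e₀, hE₀⟩ hve₀) heu
      have hvp : v ∈ p.1 := Fix1 U v hUv ⟨e₀, he₀, hUe₀, hve₀⟩ p.1 p.2.1 hq
      exact hsep ((hvy.2 p hvp).symm)
    · rintro ⟨hvvar, hvfree⟩
      by_cases hUf : U ⊆ Qp.free
      · exact absurd (Fix2 U v hUv ⟨e₀, he₀, hUe₀, hve₀⟩ hUf) hvfree
      · obtain ⟨u, hu, huf⟩ := Set.not_subset.mp hUf
        exact ⟨u, hu, ⟨e₀, he₀, hUe₀ hu⟩, huf⟩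
  · intro e he
    by_cases hne : e.Nonempty
    · have hE : e ∈ Qp.hypergraph.edges := ⟨he, hne⟩
      by_cases hc : (T.deleteEdges {s(p, q)}).Reachable p ⟨e, hE⟩
      · right
        rw [Set.eq_empty_iff_forall_notMem]
        rintro b ⟨hbe, -, hb2⟩
        exact hsep (hc.trans (hb2 ⟨e, hE⟩ hbe).symm)
      · left
        rw [Set.eq_empty_iff_forall_notMem]
        rintro a ⟨hae, -, ha2⟩
        exact hc (ha2 ⟨e, hE⟩ hae)
    · left
      rw [Set.not_nonempty_iff_eq_empty] at hne
      simp [hne]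
  · rw [Set.eq_empty_iff_forall_notMem]
    rintro a ⟨⟨-, h⟩, hf⟩
    exact h hf
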